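/- For the weak+vacuum decoy state method with intensities μ > ν > 0, if the yields of n-photon pulses are Y_n ∈ [0,1] so that Q_γ e^γ = Σ_n Y_n γ^n/n! for γ ∈ {μ, ν} and Q_vac = Y_0, then the single-photon gain satisfies Q_1 = Y_1 μ e^{−μ} ≥ (μ² e^{−μ}/(μν − ν²))[Q_ν e^ν − Q_μ e^μ (ν/μ)² − Q_vac(μ²−ν²)/μ²]. -/

import Mathlib

/-- weak+vacuum decoy-state lower bound on the single-photon gain:
    Q₁ = Y₁ μ e^{−μ} ≥ (μ²e^{−μ}/(μν − ν²))[Q_ν e^ν − Q_μ e^μ (ν/μ)² − Q_vac(μ²−ν²)/μ²]. -/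
theorem stmt18 (μ ν : ℝ) (hν : 0 < ν) (hμν : ν < μ)
    (Y : ℕ → ℝ) (hY : ∀ n, Y n ∈ Set.Icc (0:ℝ) 1)
    (Qμ Qν Qvac : ℝ)
    (hSμ : Summable (fun n : ℕ => Y n * μ^n / (n.factorial : ℝ)))
    (hSν : Summable (fun n : ℕ => Y n * ν^n / (n.factorial : ℝ)))
    (hQμ : Qμ * Real.exp μ = ∑' n : ℕ, Y n * μ^n / (n.factorial : ℝ))
    (hQν : Qν * Real.exp ν = ∑' n : ℕ, Y n * ν^n / (n.factorial : ℝ))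
    (hQvac : Qvac = Y 0) :
    Y 1 * μ * Real.exp (-μ) ≥
      (μ^2 * Real.exp (-μ) / (μ*ν - ν^2)) *
        (Qν * Real.exp ν - Qμ * Real.exp μ * (ν/μ)^2 - Qvac * (μ^2 - ν^2)/μ^2) := by
  have hμ : 0 < μ := hν.trans hμν
  set g : ℕ → ℝ := fun n => Y n * ν^n / (n.factorial : ℝ)
    - (ν/μ)^2 * (Y n * μ^n / (n.factorial : ℝ)) with hg
  have hSg : Summable g := hSν.sub (hSμ.mul_left _)
  have htsum : ∑' n, g n = Qν * Real.exp ν - Qμ * Real.exp μ * (ν/μ)^2 := by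
    rw [hg, Summable.tsum_sub hSν (hSμ.mul_left _), tsum_mul_left, ← hQν, ← hQμ]; ring
  -- tail terms nonpositive
  have htail : ∀ n : ℕ, g (n + 2) ≤ 0 := by
    intro n
    have hYn := hY (n + 2)
    have hpow : ν ^ n ≤ μ ^ n := pow_le_pow_left₀ hν.le hμν.le n
    have h1 : Y (n+2) * ν^(n+2) / ((n+2).factorial : ℝ)
        ≤ (ν/μ)^2 * (Y (n+2) * μ^(n+2) / ((n+2).factorial : ℝ)) := by
      rw [div_pow]
      have hfac : (0:ℝ) < ((n+2).factorial : ℝ) := by positivity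
      rw [div_le_iff₀ hfac] at *
      have : (ν^2/μ^2) * (Y (n+2) * μ^(n+2) / ((n+2).factorial : ℝ)) * ((n+2).factorial : ℝ)
          = Y (n+2) * (ν^2 * μ^n) := by
        field_simp
        ring
      rw [this]
      have : Y (n+2) * ν^(n+2) = Y (n+2) * (ν^2 * ν^n) := by ring
      rw [this]
      exact mul_le_mul_of_nonneg_left (by nlinarith [pow_nonneg hν.le n]) hYn.1
    simp only [hg]
    linarith
  have hsplit : ∑' n, g n = (∑ i ∈ Finset.range 2, g i) + ∑' n, g (n + 2) :=
    (Summable.sum_add_tsum_nat_add 2 hSg).symm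
  have htail_sum : ∑' n, g (n + 2) ≤ 0 := tsum_nonpos htail
  have hsum2 : ∑ i ∈ Finset.range 2, g i = g 0 + g 1 := by
    simp [Finset.sum_range_succ]
  have hkey : ∑' n, g n ≤ g 0 + g 1 := by rw [hsplit, hsum2]; linarith
  -- g 0 and g 1 values
  have hg0 : g 0 = Y 0 * (1 - (ν/μ)^2) := by simp [hg]; ring
  have hg1 : g 1 = Y 1 * ν * (μ - ν) / μ := by
    simp only [hg, pow_one, Nat.factorial_one, Nat.cast_one, div_pow]
    field_simp
  have hQvac' : Qvac * (μ^2 - ν^2)/μ^2 = g 0 := by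
    rw [hQvac, hg0, div_pow]; field_simp
  have hbracket : Qν * Real.exp ν - Qμ * Real.exp μ * (ν/μ)^2 - Qvac * (μ^2 - ν^2)/μ^2
      ≤ Y 1 * ν * (μ - ν) / μ := by
    rw [hQvac', ← htsum, ← hg1]; linarith
  have hden : 0 < μ*ν - ν^2 := by nlinarith
  have hexp : 0 < Real.exp (-μ) := Real.exp_pos _
  have hcoef : 0 < μ^2 * Real.exp (-μ) / (μ*ν - ν^2) := by positivity
  have hfinal : (μ^2 * Real.exp (-μ) / (μ*ν - ν^2)) * (Y 1 * ν * (μ - ν) / μ)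
      = Y 1 * μ * Real.exp (-μ) := by
    have hμν' : μ - ν ≠ 0 := sub_ne_zero.mpr hμν.ne'
    field_simp
  calc (μ^2 * Real.exp (-μ) / (μ*ν - ν^2)) *
        (Qν * Real.exp ν - Qμ * Real.exp μ * (ν/μ)^2 - Qvac * (μ^2 - ν^2)/μ^2)
      ≤ (μ^2 * Real.exp (-μ) / (μ*ν - ν^2)) * (Y 1 * ν * (μ - ν) / μ) :=
        mul_le_mul_of_nonneg_left hbracket hcoef.le
    _ = Y 1 * μ * Real.exp (-μ) := hfinal
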